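/- arXiv:0705.4573 — 2 statements merged into one kernel-verified Lean document; each statement's English description precedes it below -/
import Mathlib

section
/- Under the hypotheses (2.5): ∑_{ξ,y} |μ̂(ξ)|²|μ̂(yξ)|² μ(y) > Δ ∑_ξ |μ̂(ξ)|², and (2.6): μ(0), ∑_x μ(x)² < Δ/4, with S_1 := {x ∈ F_p : φ(x) > (Δ/8)φ(0)}, one has ∑_{x∈S_1, y∈F_p^×, xy∈S_1} φ(x)φ(xy)μ(y) > (1/2)·Δ·p·φ(0). -/
open Finset Complex
open scoped Classical BigOperators Pointwise

/-- The additive character `x ↦ e^{2πix/p}` on `ZMod p`. -/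
noncomputable def ePsi (p : ℕ) (x : ZMod p) : ℂ :=
  Complex.exp (2 * Real.pi * Complex.I * (x.val : ℂ) / (p : ℂ))

/-- Fourier transform of a (real) measure on `ZMod p`. -/
noncomputable def ft (p : ℕ) [NeZero p] (μ : ZMod p → ℝ) (ξ : ZMod p) : ℂ :=
  ∑ x : ZMod p, (μ x : ℂ) * ePsi p (x * ξ)

/-- Convolution of two functions on `ZMod p`. -/
noncomputable def cnv (p : ℕ) [NeZero p] (f g : ZMod p → ℝ) (x : ZMod p) : ℝ :=
  ∑ y : ZMod p, f y * g (x - y)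

/-- `φ(x) = p · (μ ∗ μ⁻)(x)`. -/
noncomputable def phiF (p : ℕ) [NeZero p] (μ : ZMod p → ℝ) (x : ZMod p) : ℝ :=
  (p : ℝ) * cnv p μ (fun y => μ (-y)) x

/-- `k`-fold convolution of `f` (0-fold is the Dirac mass at 0). -/
noncomputable def convIter (p : ℕ) [NeZero p] (f : ZMod p → ℝ) : ℕ → ZMod p → ℝ
  | 0 => fun x => if x = 0 then 1 else 0
  | n + 1 => cnv p f (convIter p f n)

/-- `ν_k`, the `k`-fold convolution of `ν = μ ∗ μ⁻`. -/
noncomputable def nuk (p : ℕ) [NeZero p] (μ : ZMod p → ℝ) (k : ℕ) : ZMod p → ℝ :=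
  convIter p (cnv p μ (fun y => μ (-y))) k

/-- `Λ_δ`, the set of large Fourier coefficients. -/
noncomputable def Lam (p : ℕ) [NeZero p] (μ : ZMod p → ℝ) (δ : ℝ) : Finset (ZMod p) :=
  Finset.univ.filter (fun ξ => (p : ℝ) ^ (-δ) < ‖ft p μ ξ‖)

section Aux

variable {p : ℕ} [NeZero p]

lemma ePsi_eq (x : ZMod p) : ePsi p x = ZMod.stdAddChar x := by
  rw [ZMod.stdAddChar_apply, ZMod.toCircle_apply, ePsi]

lemma orth' (t : ZMod p) :
    ∑ i : ZMod p, ZMod.stdAddChar (t * i) = if t = 0 then (p : ℂ) else 0 := by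
  split_ifs with h
  · simp [h, AddChar.map_zero_eq_one, Finset.card_univ, ZMod.card]
  · exact AddChar.sum_eq_zero_of_ne_one (ZMod.isPrimitive_stdAddChar p h)

lemma conj_e (z : ZMod p) :
    (starRingEnd ℂ) (ZMod.stdAddChar z) = ZMod.stdAddChar (-z) := by
  have h1 : ZMod.stdAddChar z * ZMod.stdAddChar (-z) = 1 := by
    rw [← AddChar.map_add_eq_mul, add_neg_cancel, AddChar.map_zero_eq_one]
  have h2 : ‖ZMod.stdAddChar z‖ = 1 := by
    rw [ZMod.stdAddChar_apply]; exact Circle.norm_coe _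
  rw [← Complex.inv_eq_conj h2]
  exact (eq_inv_of_mul_eq_one_right h1).symm

lemma abs_sq_c (z : ℂ) : ((‖z‖ ^ 2 : ℝ) : ℂ) = z * (starRingEnd ℂ) z := by
  rw [Complex.mul_conj, Complex.sq_norm]

lemma conj_ft (μ : ZMod p → ℝ) (ξ : ZMod p) :
    (starRingEnd ℂ) (ft p μ ξ) = ∑ y : ZMod p, (μ y : ℂ) * ZMod.stdAddChar (-(y * ξ)) := by
  rw [ft, map_sum]
  refine Finset.sum_congr rfl fun y _ => ?_
  rw [map_mul, Complex.conj_ofReal, ePsi_eq, conj_e]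

lemma sub_add_eq_zero_iff' (x y a : ZMod p) : x - y + a = 0 ↔ x = y - a := by
  constructor <;> intro h <;> linear_combination h

/-- Fourier expansion of φ. -/
lemma phiC (μ : ZMod p → ℝ) (a : ZMod p) :
    ((phiF p μ a : ℝ) : ℂ)
      = ∑ ξ : ZMod p, ((‖ft p μ ξ‖ ^ 2 : ℝ) : ℂ) * ZMod.stdAddChar (a * ξ) := by
  have estep : ∀ ξ : ZMod p, ((‖ft p μ ξ‖ ^ 2 : ℝ) : ℂ) * ZMod.stdAddChar (a * ξ)
      = ∑ x : ZMod p, ∑ y : ZMod p,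
          (μ x : ℂ) * (μ y : ℂ) * ZMod.stdAddChar ((x - y + a) * ξ) := by
    intro ξ
    rw [abs_sq_c, conj_ft, ft, Finset.sum_mul_sum, Finset.sum_mul]
    refine Finset.sum_congr rfl fun x _ => ?_
    rw [Finset.sum_mul]
    refine Finset.sum_congr rfl fun y _ => ?_
    rw [ePsi_eq]
    have h : ZMod.stdAddChar ((x - y + a) * ξ)
        = ZMod.stdAddChar (x * ξ) * (ZMod.stdAddChar (-(y * ξ)) * ZMod.stdAddChar (a * ξ)) := by
      rw [← AddChar.map_add_eq_mul, ← AddChar.map_add_eq_mul]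
      congr 1; ring
    rw [h]; ring
  simp only [estep]
  have swap : (∑ ξ : ZMod p, ∑ x : ZMod p, ∑ y : ZMod p,
        (μ x : ℂ) * (μ y : ℂ) * ZMod.stdAddChar ((x - y + a) * ξ))
      = ∑ x : ZMod p, ∑ y : ZMod p, ∑ ξ : ZMod p,
        (μ x : ℂ) * (μ y : ℂ) * ZMod.stdAddChar ((x - y + a) * ξ) := by
    rw [Finset.sum_comm]
    exact Finset.sum_congr rfl fun x _ => Finset.sum_comm
  rw [swap]
  have inner2 : ∀ x y : ZMod p, (∑ ξ : ZMod p,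
      (μ x : ℂ) * (μ y : ℂ) * ZMod.stdAddChar ((x - y + a) * ξ))
      = if x = y - a then (μ x : ℂ) * (μ y : ℂ) * (p : ℂ) else 0 := by
    intro x y
    rw [← Finset.mul_sum, orth']
    by_cases h : x = y - a
    · rw [if_pos ((sub_add_eq_zero_iff' x y a).2 h), if_pos h]
    · rw [if_neg (fun hh => h ((sub_add_eq_zero_iff' x y a).1 hh)), if_neg h, mul_zero]
  simp only [inner2]
  rw [Finset.sum_comm]
  simp only [Finset.sum_ite_eq', Finset.mem_univ, if_true]
  simp only [phiF, cnv, neg_sub]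
  push_cast
  rw [Finset.mul_sum]
  refine Finset.sum_congr rfl fun y _ => ?_
  ring

lemma ft_neg_abs (μ : ZMod p → ℝ) (ζ : ZMod p) :
    ‖ft p μ (-ζ)‖ = ‖ft p μ ζ‖ := by
  have h : ft p μ (-ζ) = (starRingEnd ℂ) (ft p μ ζ) := by
    rw [conj_ft, ft]
    refine Finset.sum_congr rfl fun x _ => ?_
    rw [ePsi_eq, mul_neg]
  rw [h, Complex.norm_conj]

lemma prodSumC (μ : ZMod p → ℝ) (y : ZMod p) :
    (∑ x : ZMod p, ((phiF p μ x : ℝ) : ℂ) * ((phiF p μ (x * y) : ℝ) : ℂ))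
      = (p : ℂ) * ∑ ξ : ZMod p,
          ((‖ft p μ ξ‖ ^ 2 : ℝ) : ℂ)
            * ((‖ft p μ (y * ξ)‖ ^ 2 : ℝ) : ℂ) := by
  simp only [phiC]
  have estep : ∀ x : ZMod p,
      (∑ ξ : ZMod p, ((‖ft p μ ξ‖ ^ 2 : ℝ) : ℂ) * ZMod.stdAddChar (x * ξ)) *
        (∑ η : ZMod p, ((‖ft p μ η‖ ^ 2 : ℝ) : ℂ) * ZMod.stdAddChar (x * y * η))
      = ∑ ξ : ZMod p, ∑ η : ZMod p,
          (((‖ft p μ ξ‖ ^ 2 : ℝ) : ℂ) * ((‖ft p μ η‖ ^ 2 : ℝ) : ℂ))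
            * ZMod.stdAddChar ((ξ + y * η) * x) := by
    intro x
    rw [Finset.sum_mul_sum]
    refine Finset.sum_congr rfl fun ξ _ => Finset.sum_congr rfl fun η _ => ?_
    have h : ZMod.stdAddChar ((ξ + y * η) * x)
        = ZMod.stdAddChar (x * ξ) * ZMod.stdAddChar (x * y * η) := by
      rw [← AddChar.map_add_eq_mul]; congr 1; ring
    rw [h]; ring
  simp only [estep]
  have swap : (∑ x : ZMod p, ∑ ξ : ZMod p, ∑ η : ZMod p,
        (((‖ft p μ ξ‖ ^ 2 : ℝ) : ℂ) * ((‖ft p μ η‖ ^ 2 : ℝ) : ℂ))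
          * ZMod.stdAddChar ((ξ + y * η) * x))
      = ∑ ξ : ZMod p, ∑ η : ZMod p, ∑ x : ZMod p,
        (((‖ft p μ ξ‖ ^ 2 : ℝ) : ℂ) * ((‖ft p μ η‖ ^ 2 : ℝ) : ℂ))
          * ZMod.stdAddChar ((ξ + y * η) * x) := by
    rw [Finset.sum_comm]
    exact Finset.sum_congr rfl fun ξ _ => Finset.sum_comm
  rw [swap]
  have inner2 : ∀ ξ η : ZMod p, (∑ x : ZMod p,
      (((‖ft p μ ξ‖ ^ 2 : ℝ) : ℂ) * ((‖ft p μ η‖ ^ 2 : ℝ) : ℂ))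
        * ZMod.stdAddChar ((ξ + y * η) * x))
      = if ξ = -(y * η) then
          (((‖ft p μ ξ‖ ^ 2 : ℝ) : ℂ) * ((‖ft p μ η‖ ^ 2 : ℝ) : ℂ))
            * (p : ℂ) else 0 := by
    intro ξ η
    rw [← Finset.mul_sum, orth']
    by_cases h : ξ = -(y * η)
    · rw [if_pos (by rw [h]; ring), if_pos h]
    · rw [if_neg (fun hh => h (by linear_combination hh)), if_neg h, mul_zero]
  simp only [inner2]
  rw [Finset.sum_comm]
  simp only [Finset.sum_ite_eq', Finset.mem_univ, if_true]
  simp only [ft_neg_abs]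
  rw [Finset.mul_sum]
  refine Finset.sum_congr rfl fun η _ => ?_
  ring

lemma phi_nonneg (μ : ZMod p → ℝ) (hpos : ∀ x, 0 ≤ μ x) (x : ZMod p) :
    0 ≤ phiF p μ x := by
  refine mul_nonneg (Nat.cast_nonneg p) (Finset.sum_nonneg fun y _ => ?_)
  exact mul_nonneg (hpos y) (hpos _)

lemma sum_phi (μ : ZMod p → ℝ) (hsum : ∑ x : ZMod p, μ x = 1) :
    ∑ x : ZMod p, phiF p μ x = p := by
  have h1 : ∀ y : ZMod p, ∑ x : ZMod p, μ (y - x) = 1 := fun y => by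
    rw [← hsum]; exact Fintype.sum_equiv (Equiv.subLeft y) _ _ fun x => rfl
  calc ∑ x : ZMod p, phiF p μ x
      = (p : ℝ) * ∑ x : ZMod p, ∑ y : ZMod p, μ y * μ (y - x) := by
        rw [Finset.mul_sum]
        refine Finset.sum_congr rfl fun x _ => ?_
        simp [phiF, cnv, neg_sub]
    _ = (p : ℝ) * ∑ y : ZMod p, μ y * ∑ x : ZMod p, μ (y - x) := by
        rw [Finset.sum_comm]
        congr 1
        exact Finset.sum_congr rfl fun y _ => (Finset.mul_sum _ _ _).symm
    _ = p := by simp only [h1, mul_one, hsum, mul_one]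

lemma sum_phi_shift [Fact p.Prime] (μ : ZMod p → ℝ) (hsum : ∑ x : ZMod p, μ x = 1)
    {y : ZMod p} (hy : y ≠ 0) : ∑ x : ZMod p, phiF p μ (x * y) = p := by
  rw [← sum_phi μ hsum]
  exact Fintype.sum_equiv (Equiv.mulRight₀ y hy) _ _ fun x => rfl

lemma parseval (μ : ZMod p → ℝ) :
    ∑ ξ : ZMod p, ‖ft p μ ξ‖ ^ 2 = phiF p μ 0 := by
  have h := phiC μ 0
  simp only [zero_mul, AddChar.map_zero_eq_one, mul_one] at h
  exact_mod_cast h.symm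

lemma prodSumR (μ : ZMod p → ℝ) (y : ZMod p) :
    ∑ x : ZMod p, phiF p μ x * phiF p μ (x * y)
      = (p : ℝ) * ∑ ξ : ZMod p,
          ‖ft p μ ξ‖ ^ 2 * ‖ft p μ (y * ξ)‖ ^ 2 := by
  have h := prodSumC μ y
  exact_mod_cast h

end Aux

theorem stmt3 (p : ℕ) [Fact p.Prime] (μ : ZMod p → ℝ)
    (hpos : ∀ x, 0 ≤ μ x) (hsum : ∑ x : ZMod p, μ x = 1)
    (Δ : ℝ) (hΔ0 : 0 < Δ) (hΔ1 : Δ ≤ 1 / 2)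
    (h25 : ∑ ξ : ZMod p, ∑ y : ZMod p,
        ‖ft p μ ξ‖ ^ 2 * ‖ft p μ (y * ξ)‖ ^ 2 * μ y
      > Δ * ∑ ξ : ZMod p, ‖ft p μ ξ‖ ^ 2)
    (h26a : μ 0 < Δ / 4) (h26b : ∑ x : ZMod p, (μ x) ^ 2 < Δ / 4)
    (S1 : Finset (ZMod p))
    (hS1 : S1 = Finset.univ.filter (fun x => Δ / 8 * phiF p μ 0 < phiF p μ x)) :
    ∑ x ∈ S1, ∑ y ∈ Finset.univ.filter (fun y : ZMod p => y ≠ 0 ∧ x * y ∈ S1),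
        phiF p μ x * phiF p μ (x * y) * μ y
      > 1 / 2 * Δ * p * phiF p μ 0 := by
  have hp0 : (0 : ℝ) < p := by exact_mod_cast (Fact.out : p.Prime).pos
  have hφnn : ∀ x, 0 ≤ phiF p μ x := phi_nonneg μ hpos
  have hΦ0 : 0 ≤ phiF p μ 0 := hφnn 0
  have hpars : ∑ ξ : ZMod p, ‖ft p μ ξ‖ ^ 2 = phiF p μ 0 := parseval μ
  have htnn : ∀ x y : ZMod p, 0 ≤ phiF p μ x * phiF p μ (x * y) * μ y := fun x y =>
    mul_nonneg (mul_nonneg (hφnn x) (hφnn _)) (hpos y)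
  set T : ℝ := ∑ x : ZMod p, ∑ y : ZMod p, phiF p μ x * phiF p μ (x * y) * μ y with hT
  -- the key identity
  have key : T = (p : ℝ) * ∑ ξ : ZMod p, ∑ y : ZMod p,
      ‖ft p μ ξ‖ ^ 2 * ‖ft p μ (y * ξ)‖ ^ 2 * μ y := by
    calc T = ∑ y : ZMod p, ∑ x : ZMod p, phiF p μ x * phiF p μ (x * y) * μ y :=
          Finset.sum_comm
      _ = ∑ y : ZMod p, (∑ x : ZMod p, phiF p μ x * phiF p μ (x * y)) * μ y := by
          refine Finset.sum_congr rfl fun y _ => ?_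
          rw [Finset.sum_mul]
      _ = ∑ y : ZMod p, ((p : ℝ) * ∑ ξ : ZMod p,
            ‖ft p μ ξ‖ ^ 2 * ‖ft p μ (y * ξ)‖ ^ 2) * μ y := by
          refine Finset.sum_congr rfl fun y _ => ?_
          rw [prodSumR]
      _ = (p : ℝ) * ∑ y : ZMod p, ∑ ξ : ZMod p,
            ‖ft p μ ξ‖ ^ 2 * ‖ft p μ (y * ξ)‖ ^ 2 * μ y := by
          rw [Finset.mul_sum]
          refine Finset.sum_congr rfl fun y _ => ?_
          rw [mul_assoc, Finset.sum_mul]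
      _ = (p : ℝ) * ∑ ξ : ZMod p, ∑ y : ZMod p,
            ‖ft p μ ξ‖ ^ 2 * ‖ft p μ (y * ξ)‖ ^ 2 * μ y := by
          rw [Finset.sum_comm]
  have hTgt : Δ * ((p : ℝ) * phiF p μ 0) < T := by
    have h := mul_lt_mul_of_pos_left h25 hp0
    rw [key]
    calc Δ * ((p : ℝ) * phiF p μ 0)
        = (p : ℝ) * (Δ * ∑ ξ : ZMod p, ‖ft p μ ξ‖ ^ 2) := by
          rw [hpars]; ring
      _ < _ := h
  -- cutoff facts
  have hS1c : ∀ x : ZMod p, x ∉ S1 → phiF p μ x ≤ Δ / 8 * phiF p μ 0 := by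
    intro x hx
    rw [hS1] at hx
    simp only [Finset.mem_filter, Finset.mem_univ, true_and, not_lt] at hx
    exact hx
  have hc_nn : 0 ≤ Δ / 8 * phiF p μ 0 := mul_nonneg (by linarith) hΦ0
  have hsφ : ∑ x : ZMod p, phiF p μ x = p := sum_phi μ hsum
  -- error term E0 (y = 0)
  have hE0 : ∑ x : ZMod p, phiF p μ x * phiF p μ (x * 0) * μ 0
      ≤ 1 / 4 * (Δ * ((p : ℝ) * phiF p μ 0)) := by
    have h1 : ∑ x : ZMod p, phiF p μ x * phiF p μ (x * 0) * μ 0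
        = (p : ℝ) * (phiF p μ 0 * μ 0) := by
      simp only [mul_zero]
      rw [← Finset.sum_mul, ← Finset.sum_mul, hsφ, mul_assoc]
    rw [h1]
    nlinarith [mul_le_mul_of_nonneg_left h26a.le (mul_nonneg hp0.le hΦ0)]
  -- error term E1 (x outside S1)
  have hmu_erase : ∑ y ∈ Finset.univ.erase (0 : ZMod p), μ y ≤ 1 := by
    rw [← hsum]
    exact Finset.sum_le_sum_of_subset_of_nonneg (Finset.erase_subset _ _)
      (fun y _ _ => hpos y)
  have hE1 : ∑ x ∈ Finset.univ \ S1, ∑ y ∈ Finset.univ.erase (0 : ZMod p),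
      phiF p μ x * phiF p μ (x * y) * μ y ≤ 1 / 8 * (Δ * ((p : ℝ) * phiF p μ 0)) := by
    calc ∑ x ∈ Finset.univ \ S1, ∑ y ∈ Finset.univ.erase (0 : ZMod p),
          phiF p μ x * phiF p μ (x * y) * μ y
        ≤ ∑ x ∈ Finset.univ \ S1, ∑ y ∈ Finset.univ.erase (0 : ZMod p),
            Δ / 8 * phiF p μ 0 * (phiF p μ (x * y) * μ y) := by
          refine Finset.sum_le_sum fun x hx => Finset.sum_le_sum fun y _ => ?_
          have hx' : x ∉ S1 := (Finset.mem_sdiff.1 hx).2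
          have h2 := hS1c x hx'
          have h3 : 0 ≤ phiF p μ (x * y) * μ y := mul_nonneg (hφnn _) (hpos y)
          calc phiF p μ x * phiF p μ (x * y) * μ y
              = phiF p μ x * (phiF p μ (x * y) * μ y) := by ring
            _ ≤ Δ / 8 * phiF p μ 0 * (phiF p μ (x * y) * μ y) :=
                mul_le_mul_of_nonneg_right h2 h3
      _ ≤ ∑ x : ZMod p, ∑ y ∈ Finset.univ.erase (0 : ZMod p),
            Δ / 8 * phiF p μ 0 * (phiF p μ (x * y) * μ y) := by
          refine Finset.sum_le_sum_of_subset_of_nonneg (Finset.sdiff_subset)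
            fun x _ _ => Finset.sum_nonneg fun y _ => ?_
          exact mul_nonneg hc_nn (mul_nonneg (hφnn _) (hpos y))
      _ = Δ / 8 * phiF p μ 0 * ∑ y ∈ Finset.univ.erase (0 : ZMod p),
            (∑ x : ZMod p, phiF p μ (x * y)) * μ y := by
          rw [Finset.sum_comm, Finset.mul_sum]
          refine Finset.sum_congr rfl fun y _ => ?_
          rw [← Finset.mul_sum, Finset.sum_mul]
      _ = Δ / 8 * phiF p μ 0 * ((p : ℝ) * ∑ y ∈ Finset.univ.erase (0 : ZMod p), μ y) := by
          congr 1
          rw [Finset.mul_sum]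
          refine Finset.sum_congr rfl fun y hy => ?_
          rw [sum_phi_shift μ hsum (Finset.ne_of_mem_erase hy)]
      _ ≤ Δ / 8 * phiF p μ 0 * ((p : ℝ) * 1) := by
          refine mul_le_mul_of_nonneg_left ?_ hc_nn
          exact mul_le_mul_of_nonneg_left hmu_erase hp0.le
      _ = 1 / 8 * (Δ * ((p : ℝ) * phiF p μ 0)) := by ring
  -- error term E2 (x*y outside S1)
  have hE2 : ∑ x : ZMod p, ∑ y ∈ Finset.univ.filter (fun y : ZMod p => y ≠ 0 ∧ x * y ∉ S1),
      phiF p μ x * phiF p μ (x * y) * μ y ≤ 1 / 8 * (Δ * ((p : ℝ) * phiF p μ 0)) := by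
    have hinner : ∀ x : ZMod p,
        ∑ y ∈ Finset.univ.filter (fun y : ZMod p => y ≠ 0 ∧ x * y ∉ S1),
          phiF p μ x * phiF p μ (x * y) * μ y
        ≤ phiF p μ x * (Δ / 8 * phiF p μ 0) := by
      intro x
      have hQμ : ∑ y ∈ Finset.univ.filter (fun y : ZMod p => y ≠ 0 ∧ x * y ∉ S1), μ y ≤ 1 := by
        rw [← hsum]
        exact Finset.sum_le_sum_of_subset_of_nonneg (Finset.filter_subset _ _)
          (fun y _ _ => hpos y)
      calc ∑ y ∈ Finset.univ.filter (fun y : ZMod p => y ≠ 0 ∧ x * y ∉ S1),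
            phiF p μ x * phiF p μ (x * y) * μ y
          ≤ ∑ y ∈ Finset.univ.filter (fun y : ZMod p => y ≠ 0 ∧ x * y ∉ S1),
              phiF p μ x * (Δ / 8 * phiF p μ 0) * μ y := by
            refine Finset.sum_le_sum fun y hy => ?_
            have hy' : x * y ∉ S1 := (Finset.mem_filter.1 hy).2.2
            have h2 := hS1c _ hy'
            have h4 : phiF p μ x * phiF p μ (x * y) ≤ phiF p μ x * (Δ / 8 * phiF p μ 0) :=
              mul_le_mul_of_nonneg_left h2 (hφnn x)
            exact mul_le_mul_of_nonneg_right h4 (hpos y)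
        _ = phiF p μ x * (Δ / 8 * phiF p μ 0)
              * ∑ y ∈ Finset.univ.filter (fun y : ZMod p => y ≠ 0 ∧ x * y ∉ S1), μ y := by
            rw [Finset.mul_sum]
        _ ≤ phiF p μ x * (Δ / 8 * phiF p μ 0) * 1 := by
            refine mul_le_mul_of_nonneg_left hQμ (mul_nonneg (hφnn x) hc_nn)
        _ = phiF p μ x * (Δ / 8 * phiF p μ 0) := by ring
    calc ∑ x : ZMod p, ∑ y ∈ Finset.univ.filter (fun y : ZMod p => y ≠ 0 ∧ x * y ∉ S1),
          phiF p μ x * phiF p μ (x * y) * μ y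
        ≤ ∑ x : ZMod p, phiF p μ x * (Δ / 8 * phiF p μ 0) := Finset.sum_le_sum fun x _ => hinner x
      _ = (p : ℝ) * (Δ / 8 * phiF p μ 0) := by rw [← Finset.sum_mul, hsφ]
      _ = 1 / 8 * (Δ * ((p : ℝ) * phiF p μ 0)) := by ring
  -- decomposition of T
  have hxNS1 : ∀ x : ZMod p, ∑ y : ZMod p, phiF p μ x * phiF p μ (x * y) * μ y
      = phiF p μ x * phiF p μ (x * 0) * μ 0
        + ∑ y ∈ Finset.univ.erase (0 : ZMod p), phiF p μ x * phiF p μ (x * y) * μ y := by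
    intro x
    exact (Finset.add_sum_erase Finset.univ _ (Finset.mem_univ 0)).symm
  have hxS1 : ∀ x : ZMod p, ∑ y : ZMod p, phiF p μ x * phiF p μ (x * y) * μ y
      ≤ (∑ y ∈ Finset.univ.filter (fun y : ZMod p => y ≠ 0 ∧ x * y ∈ S1),
          phiF p μ x * phiF p μ (x * y) * μ y)
        + (phiF p μ x * phiF p μ (x * 0) * μ 0
          + ∑ y ∈ Finset.univ.filter (fun y : ZMod p => y ≠ 0 ∧ x * y ∉ S1),
              phiF p μ x * phiF p μ (x * y) * μ y) := by
    intro x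
    have base : ∑ y : ZMod p, phiF p μ x * phiF p μ (x * y) * μ y
        = (∑ y ∈ Finset.univ.filter (fun y : ZMod p => y ≠ 0 ∧ x * y ∈ S1),
            phiF p μ x * phiF p μ (x * y) * μ y)
          + ∑ y ∈ Finset.univ.filter (fun y : ZMod p => ¬(y ≠ 0 ∧ x * y ∈ S1)),
              phiF p μ x * phiF p μ (x * y) * μ y :=
      (Finset.sum_filter_add_sum_filter_not Finset.univ _ _).symm
    have hsub : Finset.univ.filter (fun y : ZMod p => ¬(y ≠ 0 ∧ x * y ∈ S1))
        ⊆ insert (0 : ZMod p) (Finset.univ.filter (fun y : ZMod p => y ≠ 0 ∧ x * y ∉ S1)) := by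
      intro y hy
      simp only [Finset.mem_filter, Finset.mem_univ, true_and, Finset.mem_insert] at hy ⊢
      tauto
    have h0 : (0 : ZMod p) ∉ Finset.univ.filter (fun y : ZMod p => y ≠ 0 ∧ x * y ∉ S1) := by
      simp
    have hb := Finset.sum_le_sum_of_subset_of_nonneg hsub
      (fun y _ _ => htnn x y)
    rw [Finset.sum_insert h0] at hb
    linarith [base, hb]
  have hsplit : T = ∑ x ∈ Finset.univ \ S1, ∑ y : ZMod p, phiF p μ x * phiF p μ (x * y) * μ y
      + ∑ x ∈ S1, ∑ y : ZMod p, phiF p μ x * phiF p μ (x * y) * μ y := by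
    rw [hT, ← Finset.sum_sdiff (Finset.subset_univ S1)]
  have hA : ∑ x ∈ Finset.univ \ S1, ∑ y : ZMod p, phiF p μ x * phiF p μ (x * y) * μ y
      = ∑ x ∈ Finset.univ \ S1, phiF p μ x * phiF p μ (x * 0) * μ 0
        + ∑ x ∈ Finset.univ \ S1, ∑ y ∈ Finset.univ.erase (0 : ZMod p),
            phiF p μ x * phiF p μ (x * y) * μ y := by
    rw [← Finset.sum_add_distrib]
    exact Finset.sum_congr rfl fun x _ => hxNS1 x
  have hB : ∑ x ∈ S1, ∑ y : ZMod p, phiF p μ x * phiF p μ (x * y) * μ y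
      ≤ (∑ x ∈ S1, ∑ y ∈ Finset.univ.filter (fun y : ZMod p => y ≠ 0 ∧ x * y ∈ S1),
          phiF p μ x * phiF p μ (x * y) * μ y)
        + (∑ x ∈ S1, phiF p μ x * phiF p μ (x * 0) * μ 0
          + ∑ x ∈ S1, ∑ y ∈ Finset.univ.filter (fun y : ZMod p => y ≠ 0 ∧ x * y ∉ S1),
              phiF p μ x * phiF p μ (x * y) * μ y) := by
    calc ∑ x ∈ S1, ∑ y : ZMod p, phiF p μ x * phiF p μ (x * y) * μ y
        ≤ ∑ x ∈ S1, ((∑ y ∈ Finset.univ.filter (fun y : ZMod p => y ≠ 0 ∧ x * y ∈ S1),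
              phiF p μ x * phiF p μ (x * y) * μ y)
            + (phiF p μ x * phiF p μ (x * 0) * μ 0
              + ∑ y ∈ Finset.univ.filter (fun y : ZMod p => y ≠ 0 ∧ x * y ∉ S1),
                  phiF p μ x * phiF p μ (x * y) * μ y)) :=
          Finset.sum_le_sum fun x _ => hxS1 x
      _ = _ := by rw [Finset.sum_add_distrib, Finset.sum_add_distrib]
  have hC : ∑ x ∈ Finset.univ \ S1, phiF p μ x * phiF p μ (x * 0) * μ 0
      + ∑ x ∈ S1, phiF p μ x * phiF p μ (x * 0) * μ 0
      = ∑ x : ZMod p, phiF p μ x * phiF p μ (x * 0) * μ 0 :=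
    Finset.sum_sdiff (Finset.subset_univ S1)
  have hD : ∑ x ∈ S1, ∑ y ∈ Finset.univ.filter (fun y : ZMod p => y ≠ 0 ∧ x * y ∉ S1),
      phiF p μ x * phiF p μ (x * y) * μ y
      ≤ ∑ x : ZMod p, ∑ y ∈ Finset.univ.filter (fun y : ZMod p => y ≠ 0 ∧ x * y ∉ S1),
          phiF p μ x * phiF p μ (x * y) * μ y :=
    Finset.sum_le_sum_of_subset_of_nonneg (Finset.subset_univ S1)
      fun x _ _ => Finset.sum_nonneg fun y _ => htnn x y
  have final : T ≤ (∑ x ∈ S1, ∑ y ∈ Finset.univ.filter (fun y : ZMod p => y ≠ 0 ∧ x * y ∈ S1),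
        phiF p μ x * phiF p μ (x * y) * μ y)
      + (∑ x : ZMod p, phiF p μ x * phiF p μ (x * 0) * μ 0)
      + (∑ x ∈ Finset.univ \ S1, ∑ y ∈ Finset.univ.erase (0 : ZMod p),
          phiF p μ x * phiF p μ (x * y) * μ y)
      + (∑ x : ZMod p, ∑ y ∈ Finset.univ.filter (fun y : ZMod p => y ≠ 0 ∧ x * y ∉ S1),
          phiF p μ x * phiF p μ (x * y) * μ y) := by
    linarith [hsplit, hA, hB, hC, hD]
  linarith [hTgt, hE0, hE1, hE2, final]
end

section
/- Under hypotheses (2.5) and (2.6), with S_2 = S_1\{0} where S_1 = {x : φ(x) > (Δ/8)φ(0)}, one has ∑_{y∈F_p^×} |S_2 ∩ y⁻¹S_2| μ(y) ≥ Δp/(4φ(0)). -/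
open Finset Complex
open scoped Classical BigOperators Pointwise

section BCaux
set_option linter.unusedSectionVars false

private lemma bcDivHelper (P A B C K c : ℂ) (hP : P ≠ 0) (h : A + B = C + P * K) :
    c * A / P + c * B / P = c * C / P + K * c := by
  field_simp
  linear_combination c * h

variable (p : ℕ) [Fact p.Prime]

lemma hp0 : (p : ℂ) ≠ 0 := Nat.cast_ne_zero.mpr (Fact.out : p.Prime).ne_zero

lemma ePsi_zero : ePsi p 0 = 1 := by simp [ePsi]

lemma ePsi_add (a b : ZMod p) : ePsi p (a + b) = ePsi p a * ePsi p b := by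
  have hp : (p:ℂ) ≠ 0 := hp0 p
  set k := (a.val + b.val) / p with hk
  have hnat : a.val + b.val = (a+b).val + p * k := by
    rw [ZMod.val_add]; exact (Nat.mod_add_div _ _).symm
  have hc : (a.val : ℂ) + (b.val : ℂ) = ((a+b).val : ℂ) + (p : ℂ) * (k : ℂ) := by
    exact_mod_cast congrArg (Nat.cast : ℕ → ℂ) hnat
  have harg : (2*Real.pi*Complex.I*(a.val:ℂ)/p) + (2*Real.pi*Complex.I*(b.val:ℂ)/p)
       = 2*Real.pi*Complex.I*((a+b).val:ℂ)/p + (k : ℂ)*(2*Real.pi*Complex.I) :=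
    bcDivHelper (p:ℂ) _ _ _ _ _ hp hc
  rw [ePsi, ePsi, ePsi, ← Complex.exp_add, harg, Complex.exp_add]
  have : Complex.exp ((k:ℂ) * (2*Real.pi*Complex.I)) = 1 := by
    exact_mod_cast Complex.exp_int_mul_two_pi_mul_I (k : ℤ)
  rw [this, mul_one]

lemma ePsi_ne_one {a : ZMod p} (ha : a ≠ 0) : ePsi p a ≠ 1 := by
  intro h
  rw [ePsi, Complex.exp_eq_one_iff] at h
  obtain ⟨n, hn⟩ := h
  have hp : (p:ℂ) ≠ 0 := hp0 p
  rw [div_eq_iff hp] at hn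
  have hI : (2 * (Real.pi:ℂ) * Complex.I) ≠ 0 := by
    simp [Real.pi_ne_zero, Complex.I_ne_zero, Complex.ofReal_ne_zero]
  have hmul : (2 * (Real.pi:ℂ) * Complex.I) * (a.val : ℂ)
      = (2 * (Real.pi:ℂ) * Complex.I) * ((n:ℂ) * (p:ℂ)) := by linear_combination hn
  have hC : (a.val : ℂ) = (n:ℂ) * (p:ℂ) := mul_left_cancel₀ hI hmul
  have hZ : (a.val : ℤ) = n * p := by exact_mod_cast hC
  have hvpos : 0 < a.val := Nat.pos_of_ne_zero (fun h0 => ha ((ZMod.val_eq_zero a).mp h0))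
  have hvlt : a.val < p := ZMod.val_lt a
  have h1 : (0:ℤ) < (a.val:ℤ) := by exact_mod_cast hvpos
  have h2 : (a.val:ℤ) < p := by exact_mod_cast hvlt
  rcases le_or_gt n 0 with hn0 | hn1
  · have : n * (p:ℤ) ≤ 0 := mul_nonpos_iff.mpr (Or.inr ⟨hn0, by positivity⟩)
    omega
  · have hn1' : 1 ≤ n := hn1
    have : (p:ℤ) ≤ n * p := le_mul_of_one_le_left (by positivity) hn1'
    omega

lemma sum_ePsi (a : ZMod p) : ∑ ξ : ZMod p, ePsi p (a * ξ) = if a = 0 then (p:ℂ) else 0 := by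
  split_ifs with h
  · subst h; simp [ePsi_zero, Finset.card_univ]
  · have key : ePsi p a * ∑ ξ : ZMod p, ePsi p (a * ξ) = ∑ ξ : ZMod p, ePsi p (a * ξ) := by
      rw [Finset.mul_sum]
      refine Fintype.sum_equiv (Equiv.addLeft 1) _ _ (fun ξ => ?_)
      rw [← ePsi_add]
      congr 1
      simp only [Equiv.coe_addLeft]
      ring
    have h3 : (ePsi p a - 1) * ∑ ξ : ZMod p, ePsi p (a * ξ) = 0 := by
      rw [sub_mul, one_mul, sub_eq_zero]; exact key
    rcases mul_eq_zero.mp h3 with h1 | h2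
    · exact absurd (sub_eq_zero.mp h1) (ePsi_ne_one p h)
    · exact h2



lemma ePsi_ne_zero (x : ZMod p) : ePsi p x ≠ 0 := Complex.exp_ne_zero _

lemma ePsi_abs (x : ZMod p) : ‖ePsi p x‖ = 1 := by
  have h : ePsi p x = Complex.exp (((2*Real.pi*(x.val:ℝ)/(p:ℝ) : ℝ) : ℂ) * Complex.I) := by
    rw [ePsi]; congr 1; push_cast; ring
  rw [h, Complex.norm_exp_ofReal_mul_I]

lemma ePsi_conj (x : ZMod p) : (starRingEnd ℂ) (ePsi p x) = ePsi p (-x) := by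
  have h1 : (starRingEnd ℂ) (ePsi p x) * ePsi p x = 1 := by
    rw [Complex.conj_mul']
    norm_cast
    simp [ePsi_abs]
  have h2 : ePsi p (-x) * ePsi p x = 1 := by
    rw [← ePsi_add]; simp [ePsi_zero]
  exact mul_right_cancel₀ (ePsi_ne_zero p x) (h1.trans h2.symm)

lemma ft_cnv (f g : ZMod p → ℝ) (ξ : ZMod p) :
    ft p (cnv p f g) ξ = ft p f ξ * ft p g ξ := by
  unfold ft cnv
  rw [Finset.sum_mul_sum]
  push_cast
  simp_rw [Finset.sum_mul]
  rw [Finset.sum_comm]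
  refine Finset.sum_congr rfl fun y _ => ?_
  refine (Fintype.sum_equiv (Equiv.addLeft y) _ _ fun z => ?_).symm
  simp only [Equiv.coe_addLeft, add_sub_cancel_left]
  have : ePsi p ((y + z) * ξ) = ePsi p (y * ξ) * ePsi p (z * ξ) := by
    rw [← ePsi_add]; ring_nf
  rw [this]; ring

lemma ft_neg (μ : ZMod p → ℝ) (ξ : ZMod p) :
    ft p (fun x => μ (-x)) ξ = (starRingEnd ℂ) (ft p μ ξ) := by
  unfold ft
  rw [map_sum]
  refine (Fintype.sum_equiv (Equiv.neg (ZMod p)) _ _ fun x => ?_).symm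
  simp only [Equiv.neg_apply, map_mul, Complex.conj_ofReal, ePsi_conj, neg_mul, neg_neg]

lemma sq_abs_ft (μ : ZMod p → ℝ) (ξ : ZMod p) :
    ((‖ft p μ ξ‖ ^ 2 : ℝ) : ℂ) = ft p (cnv p μ (fun y => μ (-y))) ξ := by
  rw [Complex.sq_norm, ft_cnv, ft_neg, Complex.mul_conj]

section nuArgs
variable (μ : ZMod p → ℝ)


section nu
variable (hpos : ∀ x, 0 ≤ μ x) (hsum : ∑ x : ZMod p, μ x = 1)

lemma nu_apply (x : ZMod p) : cnv p μ (fun y => μ (-y)) x = ∑ y : ZMod p, μ y * μ (y - x) := by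
  unfold cnv
  refine Finset.sum_congr rfl fun y _ => ?_
  show μ y * μ (-(x - y)) = μ y * μ (y - x)
  rw [neg_sub]

include hpos in
lemma nu_nonneg (x : ZMod p) : 0 ≤ cnv p μ (fun y => μ (-y)) x := by
  rw [nu_apply]
  exact Finset.sum_nonneg fun y _ => mul_nonneg (hpos y) (hpos _)

include hsum in
lemma nu_sum : ∑ x : ZMod p, cnv p μ (fun y => μ (-y)) x = 1 := by
  simp_rw [nu_apply]
  rw [Finset.sum_comm]
  have : ∀ y : ZMod p, ∑ x : ZMod p, μ y * μ (y - x) = μ y := by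
    intro y
    rw [← Finset.mul_sum]
    have : ∑ x : ZMod p, μ (y - x) = 1 := by
      rw [← hsum]
      exact Fintype.sum_equiv (Equiv.subLeft y) _ _ fun x => rfl
    rw [this, mul_one]
  simp_rw [this, hsum]

lemma nu_even (x : ZMod p) :
    cnv p μ (fun y => μ (-y)) (-x) = cnv p μ (fun y => μ (-y)) x := by
  rw [nu_apply, nu_apply]
  refine Fintype.sum_equiv (Equiv.addRight x) _ _ fun y => ?_
  simp only [Equiv.coe_addRight, sub_neg_eq_add, add_sub_cancel_right]
  ring

lemma nu_zero : cnv p μ (fun y => μ (-y)) 0 = ∑ x : ZMod p, (μ x) ^ 2 := by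
  rw [nu_apply]
  exact Finset.sum_congr rfl fun y _ => by rw [sub_zero, sq]

include hpos in
lemma nu_le_nu_zero (x : ZMod p) :
    cnv p μ (fun y => μ (-y)) x ≤ cnv p μ (fun y => μ (-y)) 0 := by
  have hcs := Finset.sum_mul_sq_le_sq_mul_sq Finset.univ μ (fun y => μ (y - x))
  have hshift : ∑ y : ZMod p, (μ (y - x)) ^ 2 = ∑ y : ZMod p, (μ y) ^ 2 := by
    exact Fintype.sum_equiv (Equiv.subRight x) _ _ fun y => rfl
  rw [hshift] at hcs
  rw [nu_apply, nu_zero]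
  have h1 : 0 ≤ ∑ y : ZMod p, μ y * μ (y - x) :=
    Finset.sum_nonneg fun y _ => mul_nonneg (hpos y) (hpos _)
  have h2 : 0 ≤ ∑ y : ZMod p, (μ y) ^ 2 := Finset.sum_nonneg fun y _ => sq_nonneg _
  nlinarith

include hsum in
lemma nu_sum_mul {y : ZMod p} (hy : y ≠ 0) :
    ∑ b : ZMod p, cnv p μ (fun t => μ (-t)) (y * b) = 1 := by
  rw [← nu_sum p μ hsum]
  exact Fintype.sum_equiv (Equiv.mulLeft₀ y hy) _ _ fun b => rfl
end nu

lemma spec1 : ∑ ξ : ZMod p, ‖ft p μ ξ‖ ^ 2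
    = (p : ℝ) * cnv p μ (fun y => μ (-y)) 0 := by
  set ν := cnv p μ (fun y => μ (-y)) with hν
  have key : ((∑ ξ : ZMod p, ‖ft p μ ξ‖ ^ 2 : ℝ) : ℂ)
      = (((p:ℝ) * ν 0 : ℝ) : ℂ) := by
    rw [Complex.ofReal_sum]
    simp_rw [sq_abs_ft p μ]
    calc ∑ ξ : ZMod p, ft p ν ξ
        = ∑ ξ : ZMod p, ∑ a : ZMod p, (ν a : ℂ) * ePsi p (a * ξ) := rfl
      _ = ∑ a : ZMod p, (ν a : ℂ) * ∑ ξ : ZMod p, ePsi p (a * ξ) := by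
          rw [Finset.sum_comm]; simp_rw [Finset.mul_sum]
      _ = ∑ a : ZMod p, (ν a : ℂ) * (if a = 0 then (p:ℂ) else 0) := by
          simp_rw [sum_ePsi]
      _ = (((p:ℝ) * ν 0 : ℝ) : ℂ) := by
          rw [Finset.sum_eq_single 0]
          · push_cast; ring_nf; simp
          · intro a _ ha; simp [ha]
          · simp
  exact_mod_cast key

lemma spec2 (y : ZMod p) :
    ∑ ξ : ZMod p, ‖ft p μ ξ‖ ^ 2 * ‖ft p μ (y * ξ)‖ ^ 2
    = (p : ℝ) * ∑ b : ZMod p,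
        cnv p μ (fun t => μ (-t)) (-(b * y)) * cnv p μ (fun t => μ (-t)) b := by
  set ν := cnv p μ (fun t => μ (-t)) with hν
  have key : ((∑ ξ : ZMod p, ‖ft p μ ξ‖ ^ 2 * ‖ft p μ (y * ξ)‖ ^ 2 : ℝ) : ℂ)
      = (((p:ℝ) * ∑ b : ZMod p, ν (-(b * y)) * ν b : ℝ) : ℂ) := by
    have hL : ((∑ ξ : ZMod p, ‖ft p μ ξ‖ ^ 2 * ‖ft p μ (y * ξ)‖ ^ 2 : ℝ) : ℂ)
        = ∑ ξ : ZMod p, ft p ν ξ * ft p ν (y * ξ) := by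
      rw [Complex.ofReal_sum]
      exact Finset.sum_congr rfl fun ξ _ => by
        rw [Complex.ofReal_mul, sq_abs_ft p μ, sq_abs_ft p μ]
    rw [hL]
    calc ∑ ξ : ZMod p, ft p ν ξ * ft p ν (y * ξ)
        = ∑ ξ : ZMod p, ∑ a : ZMod p, ∑ b : ZMod p,
            (ν a : ℂ) * ν b * ePsi p ((a + b * y) * ξ) := by
          refine Finset.sum_congr rfl fun ξ _ => ?_
          rw [ft, ft, Finset.sum_mul_sum]
          refine Finset.sum_congr rfl fun a _ => Finset.sum_congr rfl fun b _ => ?_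
          have he : ePsi p ((a + b * y) * ξ) = ePsi p (a * ξ) * ePsi p (b * (y * ξ)) := by
            rw [← ePsi_add]; ring_nf
          rw [he]; ring
      _ = ∑ a : ZMod p, ∑ b : ZMod p, (ν a : ℂ) * ν b * ∑ ξ : ZMod p, ePsi p ((a + b * y) * ξ) := by
          rw [Finset.sum_comm]
          refine Finset.sum_congr rfl fun a _ => ?_
          rw [Finset.sum_comm]
          refine Finset.sum_congr rfl fun b _ => ?_
          rw [← Finset.mul_sum]
      _ = ∑ a : ZMod p, ∑ b : ZMod p, (ν a : ℂ) * ν b * (if a + b * y = 0 then (p:ℂ) else 0) := by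
          simp_rw [sum_ePsi]
      _ = ∑ b : ZMod p, (ν (-(b * y)) : ℂ) * ν b * p := by
          rw [Finset.sum_comm]
          refine Finset.sum_congr rfl fun b _ => ?_
          rw [Finset.sum_eq_single (-(b * y))]
          · simp
          · intro a _ ha
            have : ¬(a + b * y = 0) := fun h => ha (by linear_combination h)
            simp [this]
          · simp
      _ = (((p:ℝ) * ∑ b : ZMod p, ν (-(b * y)) * ν b : ℝ) : ℂ) := by
          push_cast [Finset.mul_sum]
          refine Finset.sum_congr rfl fun b _ => by ring
  exact_mod_cast key

end nuArgs
end BCaux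

set_option maxHeartbeats 1000000 in
theorem stmt5 (p : ℕ) [Fact p.Prime] (μ : ZMod p → ℝ)
    (hpos : ∀ x, 0 ≤ μ x) (hsum : ∑ x : ZMod p, μ x = 1)
    (Δ : ℝ) (hΔ0 : 0 < Δ) (hΔ1 : Δ ≤ 1 / 2)
    (h25 : ∑ ξ : ZMod p, ∑ y : ZMod p,
        ‖ft p μ ξ‖ ^ 2 * ‖ft p μ (y * ξ)‖ ^ 2 * μ y
      > Δ * ∑ ξ : ZMod p, ‖ft p μ ξ‖ ^ 2)
    (h26a : μ 0 < Δ / 4) (h26b : ∑ x : ZMod p, (μ x) ^ 2 < Δ / 4)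
    (S1 S2 : Finset (ZMod p))
    (hS1 : S1 = Finset.univ.filter (fun x => Δ / 8 * phiF p μ 0 < phiF p μ x))
    (hS2 : S2 = S1.erase 0) :
    ∑ y ∈ Finset.univ.filter (fun y : ZMod p => y ≠ 0),
        ((S2.filter (fun x => y * x ∈ S2)).card : ℝ) * μ y
      ≥ Δ * p / (4 * phiF p μ 0) := by
  classical
  set ν : ZMod p → ℝ := cnv p μ (fun t => μ (-t)) with hνdef
  -- basic facts
  have hpP : (0:ℝ) < p := by exact_mod_cast (Fact.out : p.Prime).pos
  have hνn : ∀ x, 0 ≤ ν x := nu_nonneg p μ hpos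
  have hνs : ∑ x : ZMod p, ν x = 1 := nu_sum p μ hsum
  have hνe : ∀ x, ν (-x) = ν x := nu_even p μ
  have hν0 : ν 0 = ∑ x : ZMod p, (μ x) ^ 2 := nu_zero p μ
  have hνle : ∀ x, ν x ≤ ν 0 := nu_le_nu_zero p μ hpos
  have hν0pos : 0 < ν 0 := by
    rw [hν0]
    obtain ⟨x, hx⟩ : ∃ x, 0 < μ x := by
      by_contra h
      push_neg at h
      have : ∀ x : ZMod p, μ x = 0 := fun x => le_antisymm (h x) (hpos x)
      rw [Finset.sum_congr rfl (fun x _ => this x)] at hsum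
      simp at hsum
    exact Finset.sum_pos' (fun i _ => sq_nonneg _) ⟨x, Finset.mem_univ x, by positivity⟩
  have hφ0 : phiF p μ 0 = (p:ℝ) * ν 0 := rfl
  have hφ0pos : 0 < phiF p μ 0 := by rw [hφ0]; positivity
  -- rewrite (2.5) in physical space
  have h25' : Δ * ((p:ℝ) * ν 0) < ∑ y : ZMod p, ((p:ℝ) * ∑ b : ZMod p, ν (-(b * y)) * ν b) * μ y := by
    have hswap : ∑ ξ : ZMod p, ∑ y : ZMod p,
        ‖ft p μ ξ‖ ^ 2 * ‖ft p μ (y * ξ)‖ ^ 2 * μ y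
        = ∑ y : ZMod p, ((p:ℝ) * ∑ b : ZMod p, ν (-(b * y)) * ν b) * μ y := by
      rw [Finset.sum_comm]
      refine Finset.sum_congr rfl fun y _ => ?_
      rw [← Finset.sum_mul, spec2]
    rw [hswap, spec1] at h25
    exact h25
  -- per-y reindexing
  have hT : ∀ y : ZMod p, ∑ b : ZMod p, ν (-(b * y)) * ν b = ∑ b : ZMod p, ν (y * b) * ν b := by
    intro y
    refine Fintype.sum_equiv (Equiv.neg (ZMod p)) _ _ fun b => ?_
    simp only [Equiv.neg_apply, mul_neg, hνe]
    rw [mul_comm b y]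
  -- membership facts
  have hmemS1 : ∀ b : ZMod p, b ∉ S1 → ν b ≤ Δ / 8 * ν 0 := by
    intro b hb
    rw [hS1] at hb
    simp only [Finset.mem_filter, Finset.mem_univ, true_and, not_lt] at hb
    have : phiF p μ b = (p:ℝ) * ν b := rfl
    rw [this, hφ0] at hb
    have := le_of_mul_le_mul_left (by linarith [hb] : (p:ℝ) * ν b ≤ (p:ℝ) * (Δ / 8 * ν 0)) hpP
    exact this
  have hmemS2 : ∀ b : ZMod p, b ≠ 0 → b ∉ S2 → ν b ≤ Δ / 8 * ν 0 := by
    intro b hb0 hb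
    refine hmemS1 b fun hb1 => hb ?_
    rw [hS2, Finset.mem_erase]
    exact ⟨hb0, hb1⟩
  -- bound T y for y ≠ 0
  have hTy : ∀ y : ZMod p, y ≠ 0 →
      ∑ b : ZMod p, ν (y * b) * ν b
        ≤ Δ / 2 * ν 0 + ((S2.filter (fun x => y * x ∈ S2)).card : ℝ) * (ν 0 * ν 0) := by
    intro y hy
    have hsplit0 : ∑ b : ZMod p, ν (y * b) * ν b
        = ν (y * 0) * ν 0 + ∑ b ∈ Finset.univ.erase 0, ν (y * b) * ν b :=
      (Finset.add_sum_erase Finset.univ (fun b => ν (y * b) * ν b)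
        (Finset.mem_univ (0 : ZMod p))).symm
    have hsplit1 : ∑ b ∈ Finset.univ.erase 0, ν (y * b) * ν b
        = (∑ b ∈ (Finset.univ.erase 0).filter (fun b => b ∈ S2 ∧ y * b ∈ S2), ν (y * b) * ν b)
        + ∑ b ∈ (Finset.univ.erase 0).filter (fun b => ¬(b ∈ S2 ∧ y * b ∈ S2)), ν (y * b) * ν b := by
      rw [Finset.sum_filter_add_sum_filter_not]
    -- good part
    have hgood : (∑ b ∈ (Finset.univ.erase 0).filter (fun b => b ∈ S2 ∧ y * b ∈ S2), ν (y * b) * ν b)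
        ≤ ((S2.filter (fun x => y * x ∈ S2)).card : ℝ) * (ν 0 * ν 0) := by
      have hset : (Finset.univ.erase 0).filter (fun b => b ∈ S2 ∧ y * b ∈ S2)
          = S2.filter (fun x => y * x ∈ S2) := by
        ext b
        simp only [Finset.mem_filter, Finset.mem_erase, Finset.mem_univ, true_and, and_true]
        constructor
        · rintro ⟨_, hb, hyb⟩; exact ⟨hb, hyb⟩
        · rintro ⟨hb, hyb⟩
          refine ⟨?_, hb, hyb⟩
          rw [hS2, Finset.mem_erase] at hb
          exact hb.1
      rw [hset]
      calc ∑ b ∈ S2.filter (fun x => y * x ∈ S2), ν (y * b) * ν b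
          ≤ ∑ _b ∈ S2.filter (fun x => y * x ∈ S2), ν 0 * ν 0 :=
            Finset.sum_le_sum fun b _ =>
              mul_le_mul (hνle _) (hνle _) (hνn _) (hνn _)
        _ = ((S2.filter (fun x => y * x ∈ S2)).card : ℝ) * (ν 0 * ν 0) := by
            rw [Finset.sum_const, nsmul_eq_mul]
    -- bad part
    have hbad : (∑ b ∈ (Finset.univ.erase 0).filter (fun b => ¬(b ∈ S2 ∧ y * b ∈ S2)), ν (y * b) * ν b)
        ≤ Δ / 4 * ν 0 := by
      have hstep : ∀ b ∈ (Finset.univ.erase 0).filter (fun b => ¬(b ∈ S2 ∧ y * b ∈ S2)),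
          ν (y * b) * ν b ≤ Δ / 8 * ν 0 * (ν (y * b) + ν b) := by
        intro b hb
        simp only [Finset.mem_filter, Finset.mem_erase, Finset.mem_univ, true_and, and_true,
          not_and_or] at hb
        obtain ⟨hb0, hcase⟩ := hb
        rcases hcase with hc | hc
        · have h1 : ν b ≤ Δ / 8 * ν 0 := hmemS2 b hb0 hc
          have h2 : ν (y * b) * ν b ≤ ν (y * b) * (Δ / 8 * ν 0) :=
            mul_le_mul_of_nonneg_left h1 (hνn _)
          have h3 : 0 ≤ Δ / 8 * ν 0 * ν b :=
            mul_nonneg (mul_nonneg (by positivity) hν0pos.le) (hνn b)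
          nlinarith [h2, h3]
        · have hyb0 : y * b ≠ 0 := mul_ne_zero hy hb0
          have h1 : ν (y * b) ≤ Δ / 8 * ν 0 := hmemS2 (y * b) hyb0 hc
          have h2 : ν (y * b) * ν b ≤ (Δ / 8 * ν 0) * ν b :=
            mul_le_mul_of_nonneg_right h1 (hνn _)
          have h3 : 0 ≤ Δ / 8 * ν 0 * ν (y * b) :=
            mul_nonneg (mul_nonneg (by positivity) hν0pos.le) (hνn (y * b))
          nlinarith [h2, h3]
      calc (∑ b ∈ (Finset.univ.erase 0).filter (fun b => ¬(b ∈ S2 ∧ y * b ∈ S2)), ν (y * b) * ν b)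
          ≤ ∑ b ∈ (Finset.univ.erase 0).filter (fun b => ¬(b ∈ S2 ∧ y * b ∈ S2)),
              Δ / 8 * ν 0 * (ν (y * b) + ν b) := Finset.sum_le_sum hstep
        _ ≤ ∑ b : ZMod p, Δ / 8 * ν 0 * (ν (y * b) + ν b) := by
            refine Finset.sum_le_sum_of_subset_of_nonneg (Finset.filter_subset _ _ |>.trans (Finset.erase_subset _ _)) ?_
            intro b _ _
            have : 0 ≤ Δ / 8 * ν 0 := by positivity
            exact mul_nonneg this (add_nonneg (hνn _) (hνn _))
        _ = Δ / 8 * ν 0 * ((∑ b : ZMod p, ν (y * b)) + ∑ b : ZMod p, ν b) := by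
            rw [← Finset.sum_add_distrib, ← Finset.mul_sum]
        _ = Δ / 4 * ν 0 := by
            rw [nu_sum_mul p μ hsum hy, hνs]; ring
    -- 0-term
    have hzero : ν (y * 0) * ν 0 ≤ Δ / 4 * ν 0 := by
      rw [mul_zero]
      have : ν 0 < Δ / 4 := by rw [hν0]; exact h26b
      nlinarith [hν0pos]
    rw [hsplit0, hsplit1]
    linarith [hgood, hbad, hzero]
  -- put it together
  set X : ℝ := ∑ y ∈ Finset.univ.filter (fun y : ZMod p => y ≠ 0),
      ((S2.filter (fun x => y * x ∈ S2)).card : ℝ) * μ y with hX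
  have hXnonneg : 0 ≤ X := by
    refine Finset.sum_nonneg fun y _ => mul_nonneg (by positivity) (hpos y)
  have hfilter : Finset.univ.filter (fun y : ZMod p => y ≠ 0) = Finset.univ.erase 0 := by
    ext y; simp [Finset.mem_erase, and_comm]
  have hμsub : ∑ y ∈ Finset.univ.erase 0, μ y ≤ 1 := by
    rw [← hsum]
    exact Finset.sum_le_sum_of_subset_of_nonneg (Finset.erase_subset _ _) (fun i _ _ => hpos i)
  -- split the main sum at y = 0
  have hmain : ∑ y : ZMod p, ((p:ℝ) * ∑ b : ZMod p, ν (-(b * y)) * ν b) * μ y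
      ≤ (p:ℝ) * ν 0 * (Δ / 4) + (p:ℝ) * (Δ / 2 * ν 0) + (p:ℝ) * (ν 0 * ν 0) * X := by
    have hsplit0 : ∑ y : ZMod p, ((p:ℝ) * ∑ b : ZMod p, ν (-(b * y)) * ν b) * μ y
        = ((p:ℝ) * ∑ b : ZMod p, ν (-(b * 0)) * ν b) * μ 0
        + ∑ y ∈ Finset.univ.erase 0, ((p:ℝ) * ∑ b : ZMod p, ν (-(b * y)) * ν b) * μ y :=
      (Finset.add_sum_erase Finset.univ
        (fun y => ((p:ℝ) * ∑ b : ZMod p, ν (-(b * y)) * ν b) * μ y)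
        (Finset.mem_univ (0 : ZMod p))).symm
    have hzero : ((p:ℝ) * ∑ b : ZMod p, ν (-(b * 0)) * ν b) * μ 0 ≤ (p:ℝ) * ν 0 * (Δ / 4) := by
      have : ∑ b : ZMod p, ν (-(b * 0)) * ν b = ν 0 := by
        simp only [mul_zero, neg_zero]
        rw [← Finset.mul_sum, hνs, mul_one]
      rw [this]
      have h0 : 0 ≤ (p:ℝ) * ν 0 := by positivity
      nlinarith [hpos 0]
    have hrest : ∑ y ∈ Finset.univ.erase 0, ((p:ℝ) * ∑ b : ZMod p, ν (-(b * y)) * ν b) * μ y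
        ≤ (p:ℝ) * (Δ / 2 * ν 0) + (p:ℝ) * (ν 0 * ν 0) * X := by
      have hterm : ∀ y ∈ Finset.univ.erase 0,
          ((p:ℝ) * ∑ b : ZMod p, ν (-(b * y)) * ν b) * μ y
          ≤ ((p:ℝ) * (Δ / 2 * ν 0) + (p:ℝ) * (ν 0 * ν 0) * ((S2.filter (fun x => y * x ∈ S2)).card : ℝ)) * μ y := by
        intro y hy
        have hy0 : y ≠ 0 := (Finset.mem_erase.mp hy).1
        have h1 := hTy y hy0
        rw [hT y]
        refine mul_le_mul_of_nonneg_right ?_ (hpos y)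
        calc (p:ℝ) * ∑ b : ZMod p, ν (y * b) * ν b
            ≤ (p:ℝ) * (Δ / 2 * ν 0 + ((S2.filter (fun x => y * x ∈ S2)).card : ℝ) * (ν 0 * ν 0)) :=
              mul_le_mul_of_nonneg_left h1 (le_of_lt hpP)
          _ = (p:ℝ) * (Δ / 2 * ν 0) + (p:ℝ) * (ν 0 * ν 0) * ((S2.filter (fun x => y * x ∈ S2)).card : ℝ) := by ring
      calc ∑ y ∈ Finset.univ.erase 0, ((p:ℝ) * ∑ b : ZMod p, ν (-(b * y)) * ν b) * μ y
          ≤ ∑ y ∈ Finset.univ.erase 0,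
              ((p:ℝ) * (Δ / 2 * ν 0) + (p:ℝ) * (ν 0 * ν 0) * ((S2.filter (fun x => y * x ∈ S2)).card : ℝ)) * μ y :=
            Finset.sum_le_sum hterm
        _ = (p:ℝ) * (Δ / 2 * ν 0) * (∑ y ∈ Finset.univ.erase 0, μ y)
            + (p:ℝ) * (ν 0 * ν 0) * ∑ y ∈ Finset.univ.erase 0, ((S2.filter (fun x => y * x ∈ S2)).card : ℝ) * μ y := by
            simp_rw [add_mul]
            rw [Finset.sum_add_distrib, ← Finset.mul_sum, Finset.mul_sum]
            congr 1
            rw [Finset.mul_sum]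
            exact Finset.sum_congr rfl fun y _ => by ring
        _ ≤ (p:ℝ) * (Δ / 2 * ν 0) + (p:ℝ) * (ν 0 * ν 0) * X := by
            have h1 : (p:ℝ) * (Δ / 2 * ν 0) * (∑ y ∈ Finset.univ.erase 0, μ y) ≤ (p:ℝ) * (Δ / 2 * ν 0) := by
              have : 0 ≤ (p:ℝ) * (Δ / 2 * ν 0) := by positivity
              nlinarith [hμsub]
            have h2 : ∑ y ∈ Finset.univ.erase 0, ((S2.filter (fun x => y * x ∈ S2)).card : ℝ) * μ y = X := by
              rw [hX, hfilter]
            rw [h2]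
            linarith [h1]
    linarith [hsplit0.le, hzero, hrest]
  -- conclude
  have hfinal : Δ * ((p:ℝ) * ν 0) < (p:ℝ) * ν 0 * (Δ / 4) + (p:ℝ) * (Δ / 2 * ν 0) + (p:ℝ) * (ν 0 * ν 0) * X :=
    lt_of_lt_of_le h25' hmain
  have h3 : ν 0 * (Δ * (p:ℝ) / 4) < ν 0 * ((p:ℝ) * ν 0 * X) := by nlinarith [hfinal]
  have h4 : Δ * (p:ℝ) / 4 < (p:ℝ) * ν 0 * X := lt_of_mul_lt_mul_left h3 (le_of_lt hν0pos)
  rw [ge_iff_le, hφ0, div_le_iff₀ (by positivity)]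
  nlinarith [h4, hν0pos, hpP]
end
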